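/- arXiv:2602.19544 — 2 statements merged into one kernel-verified Lean document; each statement's English description precedes it below -/
import Mathlib

section
/- Let p ≥ 3 be prime, B : ℕ × ℕ → ℤ satisfy Jenkins' identity, and suppose (D/p) = −1. Then for all n ≥ 1: B(D, p^{2n}d) ≡ (−1)ⁿ Σ_{k=0}^{n-1} (−1)^k p^k (p·B(p^{2k}D, d/p²) + (1 + (−d/p))B(p^{2k}D, d)) (mod pⁿ). Consequently (−1)ⁿB(D, p^{2n}d) converges in ℤ_p, and if (−d/p) = −1 and p² ∤ d then B(D, p^{2n}d) = pⁿ B(p^{2n}D, d), so the limit is 0. -/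
open Filter Finset

/-- Jenkins' identity for the traces of singular moduli `B(D,d)`, with the convention
that `B(a,b) = 0` for invalid arguments. -/
def JenkinsId (p : ℕ) [Fact p.Prime] (B : ℕ → ℕ → ℤ) : Prop :=
  ∀ D d n : ℕ, 1 ≤ n →
    B D (p ^ (2 * n) * d) =
      (p : ℤ) ^ n * B (p ^ (2 * n) * D) d
        + ∑ k ∈ range n, (legendreSym p (D : ℤ)) ^ (n - k - 1) *
            ((if p ^ 2 ∣ D then B (D / p ^ 2) (p ^ (2 * k) * d) else 0)
              - (p : ℤ) ^ (k + 1) *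
                (if p ^ 2 ∣ d then B (p ^ (2 * k) * D) (d / p ^ 2) else 0))
        + ∑ k ∈ range n, (legendreSym p (D : ℤ)) ^ (n - k - 1) *
            ((legendreSym p (D : ℤ) - legendreSym p (-(d : ℤ))) * (p : ℤ) ^ k *
              B (p ^ k * D) d)

section Aux
variable {p : ℕ} [Fact p.Prime] {B : ℕ → ℕ → ℤ}

private lemma chiP (i X : ℕ) (hi : 1 ≤ i) : legendreSym p ((p ^ i * X : ℕ) : ℤ) = 0 := by
  rw [legendreSym.eq_zero_iff]
  push_cast
  rw [ZMod.natCast_self]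
  rw [zero_pow (by omega : i ≠ 0)]
  ring

private lemma chiPneg (i X : ℕ) (hi : 1 ≤ i) : legendreSym p (-((p ^ i * X : ℕ) : ℤ)) = 0 := by
  rw [legendreSym.eq_zero_iff]
  push_cast
  rw [ZMod.natCast_self]
  rw [zero_pow (by omega : i ≠ 0)]
  ring


private lemma j1 (hJ : JenkinsId p B) (X Y : ℕ) :
    B X (p ^ 2 * Y) = (p : ℤ) * B (p ^ 2 * X) Y
      + ((if p ^ 2 ∣ X then B (X / p ^ 2) Y else 0)
          - (p : ℤ) * (if p ^ 2 ∣ Y then B X (Y / p ^ 2) else 0))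
      + (legendreSym p (X : ℤ) - legendreSym p (-(Y : ℤ))) * B X Y := by
  have h := hJ X Y 1 le_rfl
  simp only [Finset.sum_range_one, show (1:ℕ)-0-1 = 0 from by norm_num,
    show 2*1 = 2 from by norm_num, show 2*0 = 0 from by norm_num, zero_add,
    pow_zero, pow_one, one_mul] at h
  linear_combination h

private lemma j2 (hJ : JenkinsId p B) (X Y : ℕ) :
    B X (p ^ 4 * Y) = (p : ℤ) ^ 2 * B (p ^ 4 * X) Y
      + legendreSym p (X : ℤ) * ((if p ^ 2 ∣ X then B (X / p ^ 2) Y else 0)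
          - (p : ℤ) * (if p ^ 2 ∣ Y then B X (Y / p ^ 2) else 0))
      + ((if p ^ 2 ∣ X then B (X / p ^ 2) (p ^ 2 * Y) else 0)
          - (p : ℤ) ^ 2 * (if p ^ 2 ∣ Y then B (p ^ 2 * X) (Y / p ^ 2) else 0))
      + legendreSym p (X : ℤ) * (legendreSym p (X : ℤ) - legendreSym p (-(Y : ℤ))) * B X Y
      + (legendreSym p (X : ℤ) - legendreSym p (-(Y : ℤ))) * (p : ℤ) * B (p * X) Y := by
  have h := hJ X Y 2 one_le_two
  simp only [Finset.sum_range_succ, Finset.sum_range_one,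
    show (2:ℕ)-0-1 = 1 from by norm_num, show (2:ℕ)-1-1 = 0 from by norm_num,
    show 2*2 = 4 from by norm_num, show 2*1 = 2 from by norm_num,
    show 2*0 = 0 from by norm_num, show (1:ℕ)+1 = 2 from rfl, zero_add,
    pow_zero, pow_one, one_mul] at h
  linear_combination h

private lemma keyL (hJ : JenkinsId p B) (X Y n : ℕ) (hn : 1 ≤ n)
    (hX : legendreSym p (X : ℤ) = -1) :
    B X (p ^ (2 * (n+1)) * Y) + B X (p ^ (2 * n) * Y) =
      (p : ℤ) ^ (n+1) * B (p ^ (2 * (n+1)) * X) Y + (p : ℤ) ^ n * B (p ^ (2 * n) * X) Y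
      + ((if p ^ 2 ∣ X then B (X / p ^ 2) (p ^ (2 * n) * Y) else 0)
          - (p : ℤ) ^ (n+1) * (if p ^ 2 ∣ Y then B (p ^ (2 * n) * X) (Y / p ^ 2) else 0))
      + (-1 - legendreSym p (-(Y : ℤ))) * (p : ℤ) ^ n * B (p ^ n * X) Y := by
  have h1 := hJ X Y (n+1) (by omega)
  have h2 := hJ X Y n hn
  rw [hX] at h1 h2
  rw [Finset.sum_range_succ, Finset.sum_range_succ] at h1
  simp only [show n + 1 - n - 1 = 0 from by omega, pow_zero, one_mul] at h1
  have e1 : (∑ k ∈ range n, (-1 : ℤ) ^ (n + 1 - k - 1) *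
      ((if p ^ 2 ∣ X then B (X / p ^ 2) (p ^ (2 * k) * Y) else 0)
        - (p : ℤ) ^ (k + 1) * (if p ^ 2 ∣ Y then B (p ^ (2 * k) * X) (Y / p ^ 2) else 0)))
      + (∑ k ∈ range n, (-1 : ℤ) ^ (n - k - 1) *
      ((if p ^ 2 ∣ X then B (X / p ^ 2) (p ^ (2 * k) * Y) else 0)
        - (p : ℤ) ^ (k + 1) * (if p ^ 2 ∣ Y then B (p ^ (2 * k) * X) (Y / p ^ 2) else 0))) = 0 := by
    rw [← Finset.sum_add_distrib]
    apply Finset.sum_eq_zero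
    intro k hk
    rw [show n + 1 - k - 1 = (n - k - 1) + 1 from by
      have := Finset.mem_range.mp hk; omega, pow_succ]
    ring
  have e2 : (∑ k ∈ range n, (-1 : ℤ) ^ (n + 1 - k - 1) *
      ((-1 - legendreSym p (-(Y : ℤ))) * (p : ℤ) ^ k * B (p ^ k * X) Y))
      + (∑ k ∈ range n, (-1 : ℤ) ^ (n - k - 1) *
      ((-1 - legendreSym p (-(Y : ℤ))) * (p : ℤ) ^ k * B (p ^ k * X) Y)) = 0 := by
    rw [← Finset.sum_add_distrib]
    apply Finset.sum_eq_zero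
    intro k hk
    rw [show n + 1 - k - 1 = (n - k - 1) + 1 from by
      have := Finset.mem_range.mp hk; omega, pow_succ]
    ring
  linear_combination h1 + h2 + e1 + e2

private lemma chiD_not_dvd {D : ℕ} (hD : legendreSym p (D : ℤ) = -1) : ¬ p ^ 2 ∣ D := by
  intro h
  obtain ⟨c, rfl⟩ : p ∣ D := (dvd_pow_self p two_ne_zero).trans h
  rw [show p * c = p ^ 1 * c from by ring] at hD
  rw [chiP 1 c le_rfl] at hD
  exact absurd hD (by norm_num)

private lemma lemA (hJ : JenkinsId p B) (D : ℕ) (hD : legendreSym p (D : ℤ) = -1) (Y : ℕ) :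
    (1 + legendreSym p (-(Y : ℤ))) * (B (p * D) Y - B (p ^ 2 * D) Y) = 0 := by
  have hp : p.Prime := Fact.out
  have hp0 : (p : ℤ) ≠ 0 := Int.natCast_ne_zero.mpr hp.ne_zero
  have hpD2 := chiD_not_dvd hD
  have h1 := j2 hJ D Y
  have h2 := j1 hJ D (p ^ 2 * Y)
  have h3 := j1 hJ (p ^ 2 * D) Y
  have h4 := j1 hJ D Y
  rw [show p ^ 2 * (p ^ 2 * Y) = p ^ 4 * Y from by ring,
    if_pos (dvd_mul_right (p ^ 2) Y), Nat.mul_div_cancel_left Y (pow_pos hp.pos 2),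
    chiPneg 2 Y (by norm_num)] at h2
  rw [show p ^ 2 * (p ^ 2 * D) = p ^ 4 * D from by ring,
    if_pos (dvd_mul_right (p ^ 2) D), Nat.mul_div_cancel_left D (pow_pos hp.pos 2),
    chiP 2 D (by norm_num)] at h3
  rw [hD] at h1 h2 h4
  simp only [if_neg hpD2] at h1 h2 h4
  have hpmul : (p : ℤ) * ((1 + legendreSym p (-(Y : ℤ))) * (B (p * D) Y - B (p ^ 2 * D) Y)) = 0 := by
    linear_combination h1 - h2 - (p : ℤ) * h3 + h4
  rcases mul_eq_zero.mp hpmul with h | h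
  · exact absurd h hp0
  · exact h

private lemma lemB (hJ : JenkinsId p B) (D Y j : ℕ) (hj : 1 ≤ j) :
    legendreSym p (-(Y : ℤ)) * (B (p ^ (j + 2) * D) Y - B (p ^ (j + 1) * D) Y) = 0 := by
  have hp : p.Prime := Fact.out
  have hp0 : (p : ℤ) ≠ 0 := Int.natCast_ne_zero.mpr hp.ne_zero
  have h1 := j2 hJ (p ^ j * D) Y
  have h2 := j1 hJ (p ^ j * D) (p ^ 2 * Y)
  have h3 := j1 hJ (p ^ (j + 2) * D) Y
  rw [show p ^ 4 * (p ^ j * D) = p ^ (j + 4) * D from by ring,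
    show p ^ 2 * (p ^ j * D) = p ^ (j + 2) * D from by ring,
    show p * (p ^ j * D) = p ^ (j + 1) * D from by ring,
    chiP j D hj] at h1
  rw [show p ^ 2 * (p ^ 2 * Y) = p ^ 4 * Y from by ring,
    show p ^ 2 * (p ^ j * D) = p ^ (j + 2) * D from by ring,
    if_pos (dvd_mul_right (p ^ 2) Y), Nat.mul_div_cancel_left Y (pow_pos hp.pos 2),
    chiPneg 2 Y (by norm_num), chiP j D hj] at h2
  have hq : p ^ (j + 2) * D / p ^ 2 = p ^ j * D := by
    rw [show p ^ (j + 2) * D = p ^ 2 * (p ^ j * D) from by ring]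
    exact Nat.mul_div_cancel_left _ (pow_pos hp.pos 2)
  rw [show p ^ 2 * (p ^ (j + 2) * D) = p ^ (j + 4) * D from by ring,
    if_pos (dvd_mul_of_dvd_left (pow_dvd_pow p (by omega)) D : p ^ 2 ∣ p ^ (j + 2) * D), hq,
    chiP (j + 2) D (by omega)] at h3
  have hpmul : (p : ℤ) * (legendreSym p (-(Y : ℤ)) *
      (B (p ^ (j + 2) * D) Y - B (p ^ (j + 1) * D) Y)) = 0 := by
    linear_combination h2 - h1 + (p : ℤ) * h3
  rcases mul_eq_zero.mp hpmul with h | h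
  · exact absurd h hp0
  · exact h

private lemma lemStep (hJ : JenkinsId p B) (D d : ℕ) (hD : legendreSym p (D : ℤ) = -1)
    (hc : ∀ m : ℕ, legendreSym p (-((p ^ (2 * m) * d : ℕ) : ℤ)) = 0)
    (k m' : ℕ) (hk : 1 ≤ k) :
    (p : ℤ) ^ k * (B (p ^ (2 * k) * D) (p ^ (2 * (m' + 1)) * d)
        - B (p ^ k * D) (p ^ (2 * (m' + 1)) * d))
      = (p : ℤ) ^ (k + 1) * (B (p ^ (2 * (k + 1)) * D) (p ^ (2 * m') * d)
        - B (p ^ (k + 1) * D) (p ^ (2 * m') * d)) := by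
  have hp : p.Prime := Fact.out
  have hpD2 := chiD_not_dvd hD
  have k1 := keyL hJ D (p ^ (2 * (m' + 1)) * d) k hk hD
  have k2 := keyL hJ D (p ^ (2 * m') * d) (k + 1) (by omega) hD
  have h3 := j1 hJ (p ^ (2 * (k + 1)) * D) (p ^ (2 * m') * d)
  rw [show p ^ (2 * (k + 1)) * (p ^ (2 * (m' + 1)) * d) = p ^ (2 * (k + m' + 2)) * d from by ring,
      show p ^ (2 * k) * (p ^ (2 * (m' + 1)) * d) = p ^ (2 * (k + m' + 1)) * d from by ring,
      if_pos (dvd_mul_of_dvd_left (pow_dvd_pow p (by omega)) d : p ^ 2 ∣ p ^ (2 * (m' + 1)) * d),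
      show p ^ (2 * (m' + 1)) * d / p ^ 2 = p ^ (2 * m') * d from by
        rw [show p ^ (2 * (m' + 1)) * d = p ^ 2 * (p ^ (2 * m') * d) from by ring]
        exact Nat.mul_div_cancel_left _ (pow_pos hp.pos 2),
      hc (m' + 1)] at k1
  rw [show p ^ (2 * (k + 1 + 1)) * (p ^ (2 * m') * d) = p ^ (2 * (k + m' + 2)) * d from by ring,
      show p ^ (2 * (k + 1)) * (p ^ (2 * m') * d) = p ^ (2 * (k + m' + 1)) * d from by ring,
      show p ^ (2 * (k + 1 + 1)) * D = p ^ (2 * (k + 2)) * D from by ring,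
      hc m'] at k2
  simp only [if_neg hpD2] at k1 k2
  rw [show p ^ 2 * (p ^ (2 * m') * d) = p ^ (2 * (m' + 1)) * d from by ring,
      show p ^ 2 * (p ^ (2 * (k + 1)) * D) = p ^ (2 * (k + 2)) * D from by ring,
      if_pos (dvd_mul_of_dvd_left (pow_dvd_pow p (by omega)) D : p ^ 2 ∣ p ^ (2 * (k + 1)) * D),
      show p ^ (2 * (k + 1)) * D / p ^ 2 = p ^ (2 * k) * D from by
        rw [show p ^ (2 * (k + 1)) * D = p ^ 2 * (p ^ (2 * k) * D) from by ring]
        exact Nat.mul_div_cancel_left _ (pow_pos hp.pos 2),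
      chiP (2 * (k + 1)) D (by omega), hc m'] at h3
  linear_combination k2 - k1 - (p : ℤ) ^ (k + 1) * h3

private lemma lemML (hJ : JenkinsId p B) (D : ℕ) (hD : legendreSym p (D : ℤ) = -1) (d : ℕ) :
    ∀ k : ℕ, (1 + legendreSym p (-(d : ℤ))) * (B (p ^ (2 * k) * D) d - B (p ^ k * D) d) = 0 := by
  have hp : p.Prime := Fact.out
  have hp0 : (p : ℤ) ≠ 0 := Int.natCast_ne_zero.mpr hp.ne_zero
  intro k
  rcases Nat.eq_zero_or_pos k with rfl | hk
  · norm_num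
  by_cases hcz : legendreSym p (-(d : ℤ)) = 0
  · have hc : ∀ m : ℕ, legendreSym p (-((p ^ (2 * m) * d : ℕ) : ℤ)) = 0 := by
      intro m
      rcases Nat.eq_zero_or_pos m with rfl | hm
      · simp only [Nat.mul_zero, pow_zero, one_mul]; exact hcz
      · exact chiPneg (2 * m) d (by omega)
    have chain : ∀ t, 1 ≤ t → ∀ mm : ℕ,
        (p : ℤ) ^ t * (B (p ^ (2 * t) * D) (p ^ (2 * mm) * d) - B (p ^ t * D) (p ^ (2 * mm) * d))
          = (p : ℤ) * (B (p ^ 2 * D) (p ^ (2 * (mm + t - 1)) * d)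
              - B (p * D) (p ^ (2 * (mm + t - 1)) * d)) := by
      intro t ht
      induction t, ht using Nat.le_induction with
      | base => intro mm; simp only [Nat.add_sub_cancel]; norm_num
      | succ t ht ih =>
        intro mm
        have hs := lemStep hJ D d hD hc t mm ht
        rw [← hs, ih (mm + 1), show mm + 1 + t - 1 = mm + (t + 1) - 1 from by omega]
    have h1 := chain k hk 0
    simp only [Nat.mul_zero, pow_zero, one_mul, Nat.zero_add] at h1
    have h2 := lemA hJ D hD (p ^ (2 * (k - 1)) * d)
    rw [hc (k - 1)] at h2
    have h2' : B (p * D) (p ^ (2 * (k - 1)) * d) = B (p ^ 2 * D) (p ^ (2 * (k - 1)) * d) := by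
      linarith [h2]
    have h3 : (p : ℤ) ^ k * (B (p ^ (2 * k) * D) d - B (p ^ k * D) d) = 0 := by
      rw [h1, h2', sub_self, mul_zero]
    have hX := (mul_eq_zero.mp h3).resolve_left (pow_ne_zero k hp0)
    rw [hcz]
    linear_combination hX
  · have hcast : ((-(d : ℤ) : ℤ) : ZMod p) ≠ 0 := fun h =>
      hcz ((legendreSym.eq_zero_iff p _).mpr h)
    rcases legendreSym.eq_one_or_neg_one p hcast with hc1 | hc1
    · have hAll : ∀ j, 1 ≤ j → B (p ^ j * D) d = B (p * D) d := by
        intro j hj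
        induction j, hj using Nat.le_induction with
        | base => norm_num
        | succ j hj ih =>
          by_cases hj1 : j = 1
          · subst hj1
            have h2 := lemA hJ D hD d
            rw [hc1] at h2
            rw [show p ^ (1 + 1) = p ^ 2 from by norm_num]
            linarith [h2]
          · have hB := lemB hJ D d (j - 1) (by omega)
            rw [hc1, show j - 1 + 2 = j + 1 from by omega,
              show j - 1 + 1 = j from by omega] at hB
            have : B (p ^ (j + 1) * D) d = B (p ^ j * D) d := by linarith [hB]
            rw [this, ih]
      have e1 := hAll (2 * k) (by omega)
      have e2 := hAll k hk
      rw [e1, e2]; ring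
    · rw [hc1]; ring

private lemma congrM (hJ : JenkinsId p B) (D : ℕ) (hD : legendreSym p (D : ℤ) = -1)
    (d n : ℕ) (hn : 1 ≤ n) :
    B D (p ^ (2 * n) * d) = (p : ℤ) ^ n * B (p ^ (2 * n) * D) d
      + (-1 : ℤ) ^ n * ∑ k ∈ range n, (-1 : ℤ) ^ k * (p : ℤ) ^ k *
          ((p : ℤ) * (if p ^ 2 ∣ d then B (p ^ (2 * k) * D) (d / p ^ 2) else 0)
            + (1 + legendreSym p (-(d : ℤ))) * B (p ^ (2 * k) * D) d) := by
  have hpD2 := chiD_not_dvd hD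
  have hml := lemML hJ D hD d
  have h := hJ D d n hn
  rw [hD] at h
  simp only [if_neg hpD2] at h
  rw [h, Finset.mul_sum, add_assoc, ← Finset.sum_add_distrib]
  congr 1
  apply Finset.sum_congr rfl
  intro k hk
  have hk' := Finset.mem_range.mp hk
  have hsign : (-1 : ℤ) ^ n * (-1 : ℤ) ^ k = -(-1 : ℤ) ^ (n - k - 1) := by
    rw [← pow_add, show n + k = (n - k - 1) + (2 * k + 1) from by omega, pow_add,
      show ((-1 : ℤ)) ^ (2 * k + 1) = -1 from Odd.neg_one_pow ⟨k, by ring⟩]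
    ring
  linear_combination ((-1 : ℤ) ^ (n - k - 1) * (p : ℤ) ^ k) * hml k
    - ((p : ℤ) ^ (k + 1) * (if p ^ 2 ∣ d then B (p ^ (2 * k) * D) (d / p ^ 2) else 0)
        + (1 + legendreSym p (-(d : ℤ))) * (p : ℤ) ^ k * B (p ^ (2 * k) * D) d) * hsign

end Aux

/-- If `(D/p) = −1` then for `n ≥ 1`
`B(D, p^{2n}d) ≡ (−1)ⁿ Σ_{k<n} (−1)^k p^k (p·B(p^{2k}D, d/p²) + (1+(−d/p))B(p^{2k}D, d))
(mod pⁿ)`; consequently `(−1)ⁿB(D, p^{2n}d)` converges in `ℚ_p`, and if `(−d/p) = −1`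
and `p² ∤ d` then `B(D, p^{2n}d) = pⁿ B(p^{2n}D, d)`, so the limit is `0`. -/
theorem jenkins_legendre_D_eq_neg_one (p : ℕ) [Fact p.Prime] (hp3 : 3 ≤ p)
    (B : ℕ → ℕ → ℤ) (hJ : JenkinsId p B) (D : ℕ) (hD : legendreSym p (D : ℤ) = -1) :
    (∀ d n : ℕ, 1 ≤ n →
        B D (p ^ (2 * n) * d) ≡
          (-1 : ℤ) ^ n * ∑ k ∈ range n, (-1 : ℤ) ^ k * (p : ℤ) ^ k *
            ((p : ℤ) * (if p ^ 2 ∣ d then B (p ^ (2 * k) * D) (d / p ^ 2) else 0)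
              + (1 + legendreSym p (-(d : ℤ))) * B (p ^ (2 * k) * D) d)
          [ZMOD (p : ℤ) ^ n]) ∧
      (∀ d : ℕ, ∃ L : ℚ_[p],
        Tendsto (fun n : ℕ => (((-1 : ℤ) ^ n * B D (p ^ (2 * n) * d) : ℤ) : ℚ_[p]))
          atTop (nhds L)) ∧
      (∀ d : ℕ, legendreSym p (-(d : ℤ)) = -1 → ¬ p ^ 2 ∣ d →
        (∀ n : ℕ, 1 ≤ n →
            B D (p ^ (2 * n) * d) = (p : ℤ) ^ n * B (p ^ (2 * n) * D) d) ∧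
          Tendsto (fun n : ℕ => (((-1 : ℤ) ^ n * B D (p ^ (2 * n) * d) : ℤ) : ℚ_[p]))
            atTop (nhds 0)) := by
  have hp : p.Prime := Fact.out
  have hp1R : (1 : ℝ) < p := by exact_mod_cast hp.one_lt
  have hinv0 : (0 : ℝ) ≤ (p : ℝ)⁻¹ := by positivity
  have hinv1 : (p : ℝ)⁻¹ < 1 := inv_lt_one_of_one_lt₀ hp1R
  have hnormle : ∀ (x : ℤ) (n : ℕ), (p ^ n : ℤ) ∣ x → ‖(x : ℚ_[p])‖ ≤ ((p : ℝ)⁻¹) ^ n := by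
    intro x n hx
    have := (Padic.norm_int_le_pow_iff_dvd x n).mpr hx
    rwa [zpow_neg, zpow_natCast, ← inv_pow] at this
  refine ⟨?_, ?_, ?_⟩
  · intro d n hn
    rw [Int.modEq_iff_dvd]
    exact ⟨-(B (p ^ (2 * n) * D) d), by linear_combination -(congrM hJ D hD d n hn)⟩
  · intro d
    set t : ℕ → ℤ := fun k => (-1 : ℤ) ^ k * (p : ℤ) ^ k *
      ((p : ℤ) * (if p ^ 2 ∣ d then B (p ^ (2 * k) * D) (d / p ^ 2) else 0)
        + (1 + legendreSym p (-(d : ℤ))) * B (p ^ (2 * k) * D) d) with ht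
    have hnorm : ∀ k, ‖((t k : ℤ) : ℚ_[p])‖ ≤ ((p : ℝ)⁻¹) ^ k := by
      intro k
      refine hnormle _ _ ⟨(-1 : ℤ) ^ k *
        ((p : ℤ) * (if p ^ 2 ∣ d then B (p ^ (2 * k) * D) (d / p ^ 2) else 0)
          + (1 + legendreSym p (-(d : ℤ))) * B (p ^ (2 * k) * D) d), ?_⟩
      rw [ht]; ring
    have hsum : Summable (fun k => ((t k : ℤ) : ℚ_[p])) :=
      Summable.of_norm_bounded (summable_geometric_of_lt_one hinv0 hinv1) hnorm
    refine ⟨∑' k, ((t k : ℤ) : ℚ_[p]), ?_⟩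
    have hS := hsum.hasSum.tendsto_sum_nat
    have hdiff : Tendsto (fun n : ℕ =>
        (((-1 : ℤ) ^ n * B D (p ^ (2 * n) * d) : ℤ) : ℚ_[p])
          - ∑ k ∈ range n, ((t k : ℤ) : ℚ_[p])) atTop (nhds 0) := by
      refine squeeze_zero_norm' ?_
        (tendsto_pow_atTop_nhds_zero_of_lt_one hinv0 hinv1 : Tendsto (fun n : ℕ => ((p : ℝ)⁻¹) ^ n) atTop (nhds 0))
      · filter_upwards [eventually_ge_atTop 1] with n hn
        have hmain := congrM hJ D hD d n hn
        have hsq : (-1 : ℤ) ^ n * (-1 : ℤ) ^ n = 1 := by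
          rw [← pow_add]; exact Even.neg_one_pow ⟨n, by ring⟩
        have hdvd2 : (p ^ n : ℤ) ∣ ((-1 : ℤ) ^ n * B D (p ^ (2 * n) * d)
            - ∑ k ∈ range n, t k) := by
          refine ⟨(-1 : ℤ) ^ n * B (p ^ (2 * n) * D) d, ?_⟩
          linear_combination (-1 : ℤ) ^ n * hmain + (∑ k ∈ range n, t k) * hsq
        have hcasteq : (((-1 : ℤ) ^ n * B D (p ^ (2 * n) * d) : ℤ) : ℚ_[p])
            - ∑ k ∈ range n, ((t k : ℤ) : ℚ_[p])
            = ((((-1 : ℤ) ^ n * B D (p ^ (2 * n) * d)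
                - ∑ k ∈ range n, t k : ℤ)) : ℚ_[p]) := by
          push_cast
          ring
        rw [hcasteq]
        exact hnormle _ _ hdvd2
    have heq : (fun n : ℕ => (((-1 : ℤ) ^ n * B D (p ^ (2 * n) * d) : ℤ) : ℚ_[p]))
        = fun n : ℕ => (∑ k ∈ range n, ((t k : ℤ) : ℚ_[p]))
          + ((((-1 : ℤ) ^ n * B D (p ^ (2 * n) * d) : ℤ) : ℚ_[p])
              - ∑ k ∈ range n, ((t k : ℤ) : ℚ_[p])) := by
      funext n; ring
    rw [heq]
    simpa using hS.add hdiff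
  · intro d hcd hd2
    have hexact : ∀ n : ℕ, 1 ≤ n →
        B D (p ^ (2 * n) * d) = (p : ℤ) ^ n * B (p ^ (2 * n) * D) d := by
      intro n hn
      have h := hJ D d n hn
      rw [hD, hcd] at h
      simp only [if_neg (chiD_not_dvd hD), if_neg hd2, mul_zero, zero_sub, sub_zero,
        sub_self, zero_mul, neg_zero, Finset.sum_const_zero, add_zero] at h
      exact h
    refine ⟨hexact, ?_⟩
    refine squeeze_zero_norm' ?_
      (tendsto_pow_atTop_nhds_zero_of_lt_one hinv0 hinv1 : Tendsto (fun n : ℕ => ((p : ℝ)⁻¹) ^ n) atTop (nhds 0))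
    · filter_upwards [eventually_ge_atTop 1] with n hn
      refine hnormle _ _ ⟨(-1 : ℤ) ^ n * B (p ^ (2 * n) * D) d, ?_⟩
      rw [hexact n hn]; ring
end

section
/- Let p ≥ 3 be prime, B satisfy Jenkins' identity, and (D/p) = 1, (−d/p) = −1, p² ∤ d. Then the p-adic limit L := lim_{n→∞} B(D, p^{2n}d) exists and equals 2·Σ_{k=0}^{∞} p^k B(p^{2k}D, d) (a p-adically convergent series); in particular L ≡ 2B(D, d) (mod p). -/
open Filter Finset

lemma legZeroAux (p : ℕ) [Fact p.Prime] (m : ℕ) (h : p ∣ m) : legendreSym p (m:ℤ) = 0 := by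
  rw [legendreSym.eq_zero_iff]
  exact_mod_cast (ZMod.natCast_eq_zero_iff m p).2 h

lemma legZeroNegAux (p : ℕ) [Fact p.Prime] (m : ℕ) (h : p ∣ m) :
    legendreSym p (-(m:ℤ)) = 0 := by
  rw [legendreSym.eq_zero_iff]; push_cast
  simp [(ZMod.natCast_eq_zero_iff m p).2 h]

/-- Key consequence of Jenkins' identity: `B(p^{i+1}D, d) = B(p^{i+2}D, d)`. -/
lemma jenkins_key (p : ℕ) [Fact p.Prime]
    (B : ℕ → ℕ → ℤ) (hJ : JenkinsId p B) (D d : ℕ)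
    (hD : legendreSym p (D : ℤ) = 1) (hd : legendreSym p (-(d : ℤ)) = -1)
    (hd2 : ¬ p ^ 2 ∣ d) :
    ∀ i : ℕ, B (p ^ (i+1) * D) d = B (p ^ (i+2) * D) d := by
  have hp0 : 0 < p := (Fact.out : p.Prime).pos
  have hpZ : ((p:ℤ)) ≠ 0 := by exact_mod_cast hp0.ne'
  have hpD : ¬ p ∣ D := by
    intro h; have := legZeroAux p D h; omega
  have hpD2 : ¬ p ^ 2 ∣ D := fun h => hpD ((dvd_pow_self p two_ne_zero).trans h)
  have legd2 : legendreSym p (-((p:ℤ)^2*(d:ℤ))) = 0 := by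
    have := legZeroNegAux p (p^2*d) (Dvd.dvd.mul_right (dvd_pow_self p two_ne_zero) d)
    push_cast at this; exact this
  have hdvd2 : p^2 ∣ p^2*d := dvd_mul_right _ _
  have hq2 : p^2*d / p^2 = d := Nat.mul_div_cancel_left d (pow_pos hp0 2)
  intro i
  match i with
  | 0 =>
    -- case i = 0 : B(pD,d) = B(p²D,d)
    have legD2 : legendreSym p ((p:ℤ)^2*(D:ℤ)) = 0 := by
      have := legZeroAux p (p^2*D) (Dvd.dvd.mul_right (dvd_pow_self p two_ne_zero) D)
      push_cast at this; exact this
    have hdvdD : p^2 ∣ p^2*D := dvd_mul_right _ _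
    have hqD : p^2*D / p^2 = D := Nat.mul_div_cancel_left D (pow_pos hp0 2)
    have F1 := hJ D d 2 (by norm_num)
    norm_num [Finset.sum_range_succ, hD, hd, if_neg hpD2, if_neg hd2] at F1
    have F2 := hJ D (p^2*d) 1 le_rfl
    norm_num [hD, legd2, if_neg hpD2, if_pos hdvd2, hq2] at F2
    have F3 := hJ (p^2*D) d 1 le_rfl
    norm_num [legD2, hd, if_pos hdvdD, hqD, if_neg hd2] at F3
    have F4 := hJ D d 1 le_rfl
    norm_num [hD, hd, if_neg hpD2, if_neg hd2] at F4
    rw [show p^2*(p^2*d) = p^4*d from by ring] at F2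
    rw [show p^2*(p^2*D) = p^4*D from by ring] at F3
    have hcan : (2*(p:ℤ)) * B (p * D) d = (2*(p:ℤ)) * B (p^2 * D) d := by
      linear_combination F2 + (p:ℤ) * F3 + F4 - F1
    have := mul_left_cancel₀ (by simp [hpZ, hp0.ne'] : (2*(p:ℤ)) ≠ 0) hcan
    rw [show p^(0+1)*D = p*D from by ring, show p^(0+2)*D = p^2*D from by ring]
    exact this
  | (j+1) =>
    have legA : legendreSym p ((p:ℤ)^(j+1)*(D:ℤ)) = 0 := by
      have := legZeroAux p (p^(j+1)*D)
        (Dvd.dvd.mul_right (dvd_pow_self p (Nat.succ_ne_zero j)) D)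
      push_cast at this; exact this
    have legA2 : legendreSym p ((p:ℤ)^2*((p:ℤ)^(j+1)*(D:ℤ))) = 0 := by
      have := legZeroAux p (p^2*(p^(j+1)*D))
        (Dvd.dvd.mul_right (dvd_pow_self p two_ne_zero) _)
      push_cast at this; exact this
    have hdvdA : p^2 ∣ p^2*(p^(j+1)*D) := dvd_mul_right _ _
    have hqA : p^2*(p^(j+1)*D) / p^2 = p^(j+1)*D := Nat.mul_div_cancel_left _ (pow_pos hp0 2)
    have E1 := hJ (p^(j+1)*D) d 2 (by norm_num)
    norm_num [Finset.sum_range_succ, legA, hd, if_neg hd2] at E1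
    have E2 := hJ (p^(j+1)*D) (p^2*d) 1 le_rfl
    norm_num [legA, legd2, if_pos hdvd2, hq2] at E2
    have E3 := hJ (p^2*(p^(j+1)*D)) d 1 le_rfl
    norm_num [legA2, hd, if_pos hdvdA, hqA, if_neg hd2] at E3
    rw [show p^2*(p^2*d) = p^4*d from by ring] at E2
    rw [show p^2*(p^2*(p^(j+1)*D)) = p^4*(p^(j+1)*D) from by ring] at E3
    have hcan : (p:ℤ) * B (p*(p^(j+1)*D)) d = (p:ℤ) * B (p^2*(p^(j+1)*D)) d := by
      linear_combination E2 + (p:ℤ) * E3 - E1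
    have := mul_left_cancel₀ hpZ hcan
    rw [show p^(j+1+1)*D = p*(p^(j+1)*D) from by ring,
        show p^(j+1+2)*D = p^2*(p^(j+1)*D) from by ring]
    exact this

/-- The iterated form of Jenkins' identity under the given hypotheses. -/
lemma jenkins_main (p : ℕ) [Fact p.Prime]
    (B : ℕ → ℕ → ℤ) (hJ : JenkinsId p B) (D d : ℕ)
    (hD : legendreSym p (D : ℤ) = 1) (hd : legendreSym p (-(d : ℤ)) = -1)
    (hd2 : ¬ p ^ 2 ∣ d) (n : ℕ) (hn : 1 ≤ n) :
    B D (p ^ (2*n) * d) =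
      (p:ℤ)^n * B (p ^ (2*n) * D) d
        + 2 * ∑ k ∈ range n, (p:ℤ)^k * B (p ^ (2*k) * D) d := by
  have hpD : ¬ p ∣ D := by
    intro h; have := legZeroAux p D h; omega
  have hpD2 : ¬ p ^ 2 ∣ D := fun h => hpD ((dvd_pow_self p two_ne_zero).trans h)
  -- all B (p^k D) d for k ≥ 1 agree
  have key := jenkins_key p B hJ D d hD hd hd2
  have allk0 : ∀ k, B (p^(k+1)*D) d = B (p^1*D) d := by
    intro k
    induction k with
    | zero => rfl
    | succ m ih =>
      rw [← ih]
      exact (key m).symm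
  have allk : ∀ k, 1 ≤ k → B (p^k*D) d = B (p^1*D) d := by
    intro k hk
    obtain ⟨m, rfl⟩ : ∃ m, k = m + 1 := ⟨k - 1, by omega⟩
    exact allk0 m
  have a2k : ∀ k, B (p^(2*k)*D) d = B (p^k*D) d := by
    intro k
    match k with
    | 0 => norm_num
    | (m+1) =>
      rw [allk (2*(m+1)) (by omega), allk (m+1) (by omega)]
  have h := hJ D d n hn
  rw [h]
  have hs1 : ∀ k ∈ range n,
      (legendreSym p (D:ℤ))^(n-k-1) *
        ((if p ^ 2 ∣ D then B (D / p ^ 2) (p ^ (2 * k) * d) else 0)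
          - (p:ℤ)^(k+1) * (if p ^ 2 ∣ d then B (p ^ (2 * k) * D) (d / p ^ 2) else 0))
        = 0 := by
    intro k _
    rw [hD, if_neg hpD2, if_neg hd2]
    ring
  rw [Finset.sum_congr rfl hs1]
  have hs2 : ∀ k ∈ range n,
      (legendreSym p (D:ℤ))^(n-k-1) *
        ((legendreSym p (D:ℤ) - legendreSym p (-(d:ℤ))) * (p:ℤ)^k * B (p^k*D) d)
        = 2 * ((p:ℤ)^k * B (p^(2*k)*D) d) := by
    intro k _
    rw [hD, hd, a2k k]
    ring
  rw [Finset.sum_congr rfl hs2]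
  rw [Finset.sum_const_zero, ← Finset.mul_sum]
  ring

/-- If `(D/p) = 1`, `(−d/p) = −1` and `p² ∤ d`, then the `p`-adic limit
`L = lim_{n→∞} B(D, p^{2n}d)` exists and equals the `p`-adically convergent series
`2·Σ_{k=0}^∞ p^k B(p^{2k}D, d)`; in particular `L ≡ 2B(D,d) (mod p)`. -/
theorem jenkins_limit_eq_series (p : ℕ) [Fact p.Prime] (hp3 : 3 ≤ p)
    (B : ℕ → ℕ → ℤ) (hJ : JenkinsId p B) (D d : ℕ)
    (hD : legendreSym p (D : ℤ) = 1) (hd : legendreSym p (-(d : ℤ)) = -1)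
    (hd2 : ¬ p ^ 2 ∣ d) :
    ∃ L : ℚ_[p],
      Tendsto (fun n : ℕ => ((B D (p ^ (2 * n) * d) : ℤ) : ℚ_[p])) atTop (nhds L) ∧
        L = 2 * ∑' k : ℕ, (p : ℚ_[p]) ^ k * ((B (p ^ (2 * k) * D) d : ℤ) : ℚ_[p]) ∧
        ‖L - 2 * ((B D d : ℤ) : ℚ_[p])‖ ≤ ((p : ℝ))⁻¹ := by
  have hp0 : 0 < p := (Fact.out : p.Prime).pos
  have hp1 : 1 < p := (Fact.out : p.Prime).one_lt
  set x : ℕ → ℚ_[p] := fun k => (p : ℚ_[p]) ^ k * ((B (p ^ (2 * k) * D) d : ℤ) : ℚ_[p])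
    with hx
  have hxnorm : ∀ k, ‖x k‖ ≤ ((p:ℝ)⁻¹)^k := by
    intro k
    rw [hx]
    simp only [norm_mul, norm_pow, Padic.norm_p]
    calc ((p:ℝ)⁻¹)^k * ‖((B (p ^ (2 * k) * D) d : ℤ) : ℚ_[p])‖
        ≤ ((p:ℝ)⁻¹)^k * 1 := by
          apply mul_le_mul_of_nonneg_left (Padic.norm_int_le_one _) (by positivity)
      _ = ((p:ℝ)⁻¹)^k := by ring
  have hrlt : (p:ℝ)⁻¹ < 1 := by
    rw [inv_lt_one_iff₀]; right; exact_mod_cast hp1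
  have hsum : Summable x :=
    Summable.of_norm_bounded (summable_geometric_of_lt_one (by positivity) hrlt) hxnorm
  refine ⟨2 * ∑' k, x k, ?_, rfl, ?_⟩
  · -- convergence
    have hS : Tendsto (fun n => 2 * ∑ k ∈ range n, x k + x n) atTop
        (nhds (2 * ∑' k, x k + 0)) :=
      (hsum.hasSum.tendsto_sum_nat.const_mul 2).add hsum.tendsto_atTop_zero
    rw [add_zero] at hS
    apply hS.congr'
    filter_upwards [eventually_ge_atTop 1] with n hn
    have h := jenkins_main p B hJ D d hD hd hd2 n hn
    have : ((B D (p ^ (2*n) * d) : ℤ) : ℚ_[p]) =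
        (p:ℚ_[p])^n * ((B (p ^ (2*n) * D) d : ℤ) : ℚ_[p])
          + 2 * ∑ k ∈ range n, (p:ℚ_[p])^k * ((B (p ^ (2*k) * D) d : ℤ) : ℚ_[p]) := by
      exact_mod_cast congrArg (fun z : ℤ => (z : ℚ_[p])) h
    rw [this, hx]
    ring
  · -- the mod p congruence
    have hbound : ∀ n : ℕ, 1 ≤ n →
        ‖((B D (p ^ (2*n) * d) : ℤ) : ℚ_[p]) - 2 * ((B D d : ℤ) : ℚ_[p])‖ ≤ (p:ℝ)⁻¹ := by
      intro n hn
      obtain ⟨m, rfl⟩ : ∃ m, n = m + 1 := ⟨n - 1, by omega⟩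
      have h := jenkins_main p B hJ D d hD hd hd2 (m+1) (by omega)
      rw [Finset.sum_range_succ'] at h
      have hc : B D (p ^ (2*(m+1)) * d) - 2 * B D d =
          (p:ℤ) * ((p:ℤ)^m * B (p ^ (2*(m+1)) * D) d
            + 2 * ∑ k ∈ range m, (p:ℤ)^k * B (p ^ (2*(k+1)) * D) d) := by
        rw [h]
        have e0 : ((p:ℤ))^0 * B (p^(2*0)*D) d = B D d := by norm_num
        rw [e0]
        have e1 : ∀ k ∈ range m, (p:ℤ)^(k+1) * B (p ^ (2*(k+1)) * D) d
            = (p:ℤ) * ((p:ℤ)^k * B (p ^ (2*(k+1)) * D) d) := fun k _ => by ring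
        rw [Finset.sum_congr rfl e1, ← Finset.mul_sum]
        ring
      have : ((B D (p ^ (2*(m+1)) * d) : ℤ) : ℚ_[p]) - 2 * ((B D d : ℤ) : ℚ_[p]) =
          (p:ℚ_[p]) * (((p:ℤ)^m * B (p ^ (2*(m+1)) * D) d
            + 2 * ∑ k ∈ range m, (p:ℤ)^k * B (p ^ (2*(k+1)) * D) d : ℤ) : ℚ_[p]) := by
        exact_mod_cast congrArg (fun z : ℤ => (z : ℚ_[p])) hc
      rw [this, norm_mul, Padic.norm_p]
      calc (p:ℝ)⁻¹ * ‖(_ : ℚ_[p])‖ ≤ (p:ℝ)⁻¹ * 1 :=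
            mul_le_mul_of_nonneg_left (Padic.norm_int_le_one _) (by positivity)
        _ = (p:ℝ)⁻¹ := by ring
    -- pass to the limit
    have hS : Tendsto (fun n => 2 * ∑ k ∈ range n, x k + x n) atTop
        (nhds (2 * ∑' k, x k + 0)) :=
      (hsum.hasSum.tendsto_sum_nat.const_mul 2).add hsum.tendsto_atTop_zero
    rw [add_zero] at hS
    have hf : Tendsto (fun n : ℕ => ((B D (p ^ (2 * n) * d) : ℤ) : ℚ_[p])) atTop
        (nhds (2 * ∑' k, x k)) := by
      apply hS.congr'
      filter_upwards [eventually_ge_atTop 1] with n hn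
      have h := jenkins_main p B hJ D d hD hd hd2 n hn
      have : ((B D (p ^ (2*n) * d) : ℤ) : ℚ_[p]) =
          (p:ℚ_[p])^n * ((B (p ^ (2*n) * D) d : ℤ) : ℚ_[p])
            + 2 * ∑ k ∈ range n, (p:ℚ_[p])^k * ((B (p ^ (2*k) * D) d : ℤ) : ℚ_[p]) := by
        exact_mod_cast congrArg (fun z : ℤ => (z : ℚ_[p])) h
      rw [this, hx]
      ring
    have hnorm : Tendsto
        (fun n : ℕ => ‖((B D (p ^ (2 * n) * d) : ℤ) : ℚ_[p]) - 2 * ((B D d : ℤ) : ℚ_[p])‖)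
        atTop (nhds ‖2 * ∑' k, x k - 2 * ((B D d : ℤ) : ℚ_[p])‖) :=
      (hf.sub_const _).norm
    have hEv : ∀ᶠ n : ℕ in atTop,
        ‖((B D (p ^ (2 * n) * d) : ℤ) : ℚ_[p]) - 2 * ((B D d : ℤ) : ℚ_[p])‖ ≤ (p:ℝ)⁻¹ := by
      filter_upwards [eventually_ge_atTop 1] with n hn
      exact hbound n hn
    exact le_of_tendsto hnorm hEv
end
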